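/- Let γ be a nonnegative random variable with continuous distribution and let γ_e ≥ 0 be independent of γ with Pr[γ_e < γ] > 0. Then there exist a threshold τ > 0 and a power P > 0 such that Pr[γ ≥ τ] · E[{log((1+τP)/(1+γ_e P))}^+] > 0; i.e., a 1-bit feedback scheme achieves a strictly positive secrecy rate. -/

import Mathlib

open MeasureTheory ProbabilityTheory

/-- Let `γ` be a nonnegative random variable with continuous
(atomless) distribution and `γe ≥ 0` independent of `γ` with
`Pr[γe < γ] > 0`.  Then there exist a threshold `τ > 0` and a power `P > 0`
such that `Pr[γ ≥ τ] · E[{log((1+τP)/(1+γe P))}^+] > 0`: a 1-bit feedback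
scheme achieves a strictly positive secrecy rate. -/
theorem stmt_11 {Ω : Type*} [MeasurableSpace Ω] (μ : Measure Ω) [IsProbabilityMeasure μ]
    (γ γe : Ω → ℝ) (hγm : Measurable γ) (hγem : Measurable γe)
    (hγ0 : ∀ ω, 0 ≤ γ ω) (hγe0 : ∀ ω, 0 ≤ γe ω)
    (hind : IndepFun γ γe μ)
    (hcont : ∀ t : ℝ, μ {ω | γ ω = t} = 0)
    (hpos : 0 < μ {ω | γe ω < γ ω}) :
    ∃ τ > (0 : ℝ), ∃ P > (0 : ℝ),
      0 < (μ {ω | τ ≤ γ ω}).toReal *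
        ∫ ω, max 0 (Real.log ((1 + τ * P) / (1 + γe ω * P))) ∂μ := by
  -- find a rational q with μ ({γe < q} ∩ {q < γ}) > 0
  have hsub : {ω | γe ω < γ ω} ⊆ ⋃ q : ℚ, ({ω | γe ω < (q:ℝ)} ∩ {ω | (q:ℝ) < γ ω}) := by
    intro ω hω
    obtain ⟨q, hq1, hq2⟩ := exists_rat_btwn (show γe ω < γ ω from hω)
    exact Set.mem_iUnion.mpr ⟨q, hq1, hq2⟩
  have hq : ∃ q : ℚ, 0 < μ ({ω | γe ω < (q:ℝ)} ∩ {ω | (q:ℝ) < γ ω}) := by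
    by_contra h
    push_neg at h
    have : μ {ω | γe ω < γ ω} = 0 := by
      apply measure_mono_null hsub
      exact measure_iUnion_null fun q => le_antisymm (h q) zero_le
    exact hpos.ne' this
  obtain ⟨q, hqpos⟩ := hq
  have hne : ({ω | γe ω < (q:ℝ)} ∩ {ω | (q:ℝ) < γ ω}).Nonempty :=
    nonempty_of_measure_ne_zero hqpos.ne'
  obtain ⟨ω0, hω0e, hω0g⟩ := hne
  have hq0 : (0:ℝ) < q := lt_of_le_of_lt (hγe0 ω0) hω0e
  refine ⟨(q:ℝ), hq0, 1, one_pos, ?_⟩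
  set τ : ℝ := (q:ℝ)
  -- first factor
  have h1 : 0 < (μ {ω | τ ≤ γ ω}).toReal := by
    refine ENNReal.toReal_pos ?_ (measure_ne_top _ _)
    have : 0 < μ {ω | τ ≤ γ ω} := by
      refine lt_of_lt_of_le (lt_of_lt_of_le hqpos (measure_mono Set.inter_subset_right)) ?_
      exact measure_mono (Set.setOf_subset_setOf.mpr fun ω h => le_of_lt h)
    exact this.ne'
  -- the integrand
  set f : Ω → ℝ := fun ω => max 0 (Real.log ((1 + τ * 1) / (1 + γe ω * 1))) with hf
  have hden : ∀ ω, (0:ℝ) < 1 + γe ω * 1 := fun ω => by nlinarith [hγe0 ω]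
  have hfm : Measurable f := by
    apply measurable_const.max
    exact (Real.measurable_log.comp ((measurable_const.add (hγem.mul measurable_const)).const_div _))
  have hfnn : ∀ ω, 0 ≤ f ω := fun ω => le_max_left _ _
  have hfbd : ∀ ω, ‖f ω‖ ≤ Real.log (1 + τ) := by
    intro ω
    rw [Real.norm_of_nonneg (hfnn ω)]
    refine max_le ?_ ?_
    · exact Real.log_nonneg (by linarith)
    · apply Real.log_le_log (div_pos (by nlinarith) (hden ω))
      rw [div_le_iff₀ (hden ω)]
      nlinarith [hγe0 ω, hq0.le]
  have hint : Integrable f μ := by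
    refine Integrable.mono' (integrable_const (Real.log (1 + τ))) hfm.aestronglyMeasurable ?_
    exact Filter.Eventually.of_forall hfbd
  have hsupp : {ω | γe ω < τ} ⊆ Function.support f := by
    intro ω hω
    have : (1:ℝ) < (1 + τ * 1) / (1 + γe ω * 1) := by
      rw [lt_div_iff₀ (hden ω)]
      simp only [Set.mem_setOf_eq] at hω
      nlinarith
    have hlog : 0 < Real.log ((1 + τ * 1) / (1 + γe ω * 1)) := Real.log_pos this
    simp only [Function.mem_support, hf]
    positivity
  have h2 : 0 < ∫ ω, f ω ∂μ := by
    rw [integral_pos_iff_support_of_nonneg_ae (Filter.Eventually.of_forall hfnn) hint]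
    refine lt_of_lt_of_le ?_ (measure_mono hsupp)
    exact lt_of_lt_of_le hqpos (measure_mono Set.inter_subset_left)
  exact mul_pos h1 h2
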